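/- arXiv:2304.04091 — 7 statements merged into one kernel-verified Lean document; each statement's English description precedes it below -/
import Mathlib

section
/- Let μ ∈ S satisfy C(μ) = ∅ (so k*(μ) = 0). Then sup_{w ∈ Σ_{K×L}} inf_{λ ∈ Alt(μ)} Σ_{k∈[K]} Σ_{l∈[L]} w_{k,l}(μ_{k,l} − λ_{k,l})² = max_{w ∈ Σ_{K×L}} min_{k∈[K]} Σ_{l∈[M], μ_{k,l}<0} w_{k,l} μ_{k,l}², and the supremum on the left-hand side is attained by some w ∈ Σ_{K×L}. -/
open Finset Set

noncomputable section

/-- Arm `k` is feasible under model `μ`: all the first `M` subpopulation means are nonnegative. -/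
def feasible (M : ℕ) {K L : ℕ} (μ : Fin K → Fin L → ℝ) (k : Fin K) : Prop :=
  ∀ l : Fin L, (l : ℕ) < M → 0 ≤ μ k l

/-- Quality of arm `k`: the `q`-weighted average of its subpopulation means. -/
def quality {K L : ℕ} (q : Fin L → ℝ) (μ : Fin K → Fin L → ℝ) (k : Fin K) : ℝ :=
  ∑ l, q l * μ k l

/-- `isBestArm M q μ a` : `a` is the answer `k*(μ)` making `μ` a member of the class `S`.
`a = some k` means `k` is the unique best feasible arm with all constraints strictly
satisfied; `a = none` (i.e. `k*(μ) = 0`) means every arm strictly violates a constraint. -/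
def isBestArm (M : ℕ) {K L : ℕ} (q : Fin L → ℝ) (μ : Fin K → Fin L → ℝ) :
    Option (Fin K) → Prop
  | some k => (∀ l : Fin L, (l : ℕ) < M → 0 < μ k l) ∧
      (∀ j : Fin K, j ≠ k → feasible M μ j → quality q μ j < quality q μ k)
  | none => ∀ k : Fin K, ∃ l : Fin L, (l : ℕ) < M ∧ μ k l < 0

/-- The class `S` of well-separated bandit models. -/
def inS (M : ℕ) {K L : ℕ} (q : Fin L → ℝ) (μ : Fin K → Fin L → ℝ) : Prop :=
  ∃ a, isBestArm M q μ a

/-- The simplex `Σ_{K×L}` of sampling weights. -/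
def simplex (K L : ℕ) : Set (Fin K → Fin L → ℝ) :=
  {w | (∀ k l, 0 ≤ w k l) ∧ ∑ k, ∑ l, w k l = 1}

/-- The weighted squared distance `Σ_k Σ_l w_{k,l} (μ_{k,l} - λ_{k,l})²`. -/
def wDist {K L : ℕ} (w μ lam : Fin K → Fin L → ℝ) : ℝ :=
  ∑ k, ∑ l, w k l * (μ k l - lam k l) ^ 2

/-- `Alt M q μ a` : the set of models in `S` whose answer differs from `a = k*(μ)`. -/
def Alt (M : ℕ) {K L : ℕ} (q : Fin L → ℝ) (a : Option (Fin K)) :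
    Set (Fin K → Fin L → ℝ) :=
  {lam | ∃ b, isBestArm M q lam b ∧ b ≠ a}

/-- `f^opt_μ(w)` for best arm `ks = k*(μ)`. -/
def fopt (M : ℕ) {K L : ℕ} (q : Fin L → ℝ) (μ : Fin K → Fin L → ℝ) (ks : Fin K)
    (w : Fin K → Fin L → ℝ) : ℝ :=
  ⨅ k : {k : Fin K // k ≠ ks},
    sInf {v : ℝ | ∃ lam : Fin K → Fin L → ℝ,
      quality q lam ks ≤ quality q lam k.1 ∧
      (∀ l : Fin L, (l : ℕ) < M → 0 ≤ lam k.1 l) ∧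
      v = (∑ l, w ks l * (μ ks l - lam ks l) ^ 2)
            + ∑ l, w k.1 l * (μ k.1 l - lam k.1 l) ^ 2}

/-- `f^fea_μ(w)` for best arm `ks = k*(μ)`. -/
def ffea (M : ℕ) {K L : ℕ} (μ : Fin K → Fin L → ℝ) (ks : Fin K)
    (w : Fin K → Fin L → ℝ) : ℝ :=
  ⨅ l : {l : Fin L // (l : ℕ) < M}, w ks l.1 * (μ ks l.1) ^ 2

/-- `min_{k∈[K]} Σ_{l∈[M], μ_{k,l}<0} w_{k,l} μ_{k,l}²`. -/
def gInfeas (M : ℕ) {K L : ℕ} (μ : Fin K → Fin L → ℝ) (w : Fin K → Fin L → ℝ) : ℝ :=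
  ⨅ k : Fin K, ∑ l ∈ univ.filter (fun l : Fin L => (l : ℕ) < M ∧ μ k l < 0),
    w k l * (μ k l) ^ 2


/-- A conditionally complete `iInf` over a nonempty fintype equals a `Finset.inf'`. -/
lemma ciInf_eq_inf'_univ {ι : Type*} [Fintype ι] [Nonempty ι] (f : ι → ℝ) :
    (⨅ i, f i) = Finset.univ.inf' Finset.univ_nonempty f := by
  obtain ⟨i₀, -, h⟩ := Finset.exists_mem_eq_inf' (Finset.univ_nonempty (α := ι)) f
  refine le_antisymm ?_ ?_
  · rw [h]; exact ciInf_le (Set.Finite.bddBelow (Set.finite_range f)) i₀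
  · exact le_ciInf fun i => Finset.inf'_le f (Finset.mem_univ i)

/-- Construction of alternative models close to the infeasibility cost of arm `k`. -/
lemma exists_alt_close {K L M : ℕ} (q : Fin L → ℝ)
    (μ : Fin K → Fin L → ℝ) (hμ : isBestArm M q μ (none : Option (Fin K)))
    (w : Fin K → Fin L → ℝ) (hw : ∀ k l, 0 ≤ w k l) (k : Fin K) {δ : ℝ} (hδ : 0 < δ) :
    ∃ lam ∈ Alt M q (none : Option (Fin K)),
      wDist w μ lam ≤ (∑ l ∈ univ.filter (fun l : Fin L => (l : ℕ) < M ∧ μ k l < 0),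
        w k l * (μ k l) ^ 2) + δ := by
  set B : ℝ := ∑ l, w k l * (1 + 2 * |μ k l|) with hBdef
  have hB : 0 ≤ B := Finset.sum_nonneg fun l _ => mul_nonneg (hw k l) (by positivity)
  set ε : ℝ := min 1 (δ / (B + 1)) with hεdef
  have hε : 0 < ε := lt_min one_pos (div_pos hδ (by linarith))
  have hε1 : ε ≤ 1 := min_le_left _ _
  have hε2 : ε ≤ δ / (B + 1) := min_le_right _ _
  set lam : Fin K → Fin L → ℝ :=
    fun j l => if j = k ∧ (l : ℕ) < M ∧ μ j l ≤ 0 then ε else μ j l with hlam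
  have hlamne : ∀ j, j ≠ k → ∀ l, lam j l = μ j l := fun j hj l => by
    simp [hlam, hj]
  have hmem : lam ∈ Alt M q (none : Option (Fin K)) := by
    refine ⟨some k, ?_, by simp⟩
    show isBestArm M q lam (some k)
    refine ⟨?_, ?_⟩
    · intro l hl
      by_cases h : μ k l ≤ 0
      · simp only [hlam]; rw [if_pos ⟨by trivial, hl, h⟩]; exact hε
      · simp only [hlam]; rw [if_neg (by tauto)]; linarith [not_le.mp h]
    · intro j hj hfeas
      exfalso
      obtain ⟨l, hlM, hneg⟩ := hμ j
      have := hfeas l hlM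
      rw [hlamne j hj l] at this
      linarith
  refine ⟨lam, hmem, ?_⟩
  have hsum : wDist w μ lam
      = ∑ l ∈ univ.filter (fun l : Fin L => (l : ℕ) < M ∧ μ k l ≤ 0),
          w k l * (μ k l - ε) ^ 2 := by
    rw [wDist, Finset.sum_eq_single_of_mem k (Finset.mem_univ k)]
    · rw [← Finset.sum_filter_add_sum_filter_not Finset.univ
          (fun l : Fin L => (l : ℕ) < M ∧ μ k l ≤ 0)]
      have h2 : ∑ l ∈ univ.filter (fun l : Fin L => ¬((l : ℕ) < M ∧ μ k l ≤ 0)),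
          w k l * (μ k l - lam k l) ^ 2 = 0 := by
        apply Finset.sum_eq_zero
        intro l hl
        rw [Finset.mem_filter] at hl
        have h3 : lam k l = μ k l := by simp only [hlam]; rw [if_neg (by tauto)]
        rw [h3]; ring
      rw [h2, add_zero]
      apply Finset.sum_congr rfl
      intro l hl
      rw [Finset.mem_filter] at hl
      have h3 : lam k l = ε := by simp only [hlam]; rw [if_pos ⟨by trivial, hl.2⟩]
      rw [h3]
    · intro j _ hj
      apply Finset.sum_eq_zero
      intro l _
      rw [hlamne j hj l]; ring
  rw [hsum]
  have step1 : ∑ l ∈ univ.filter (fun l : Fin L => (l : ℕ) < M ∧ μ k l ≤ 0),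
      w k l * (μ k l - ε) ^ 2
      ≤ (∑ l ∈ univ.filter (fun l : Fin L => (l : ℕ) < M ∧ μ k l ≤ 0),
          w k l * (μ k l) ^ 2) + ε * B := by
    have hterm : ∀ l ∈ univ.filter (fun l : Fin L => (l : ℕ) < M ∧ μ k l ≤ 0),
        w k l * (μ k l - ε) ^ 2
          ≤ w k l * (μ k l) ^ 2 + ε * (w k l * (1 + 2 * |μ k l|)) := by
      intro l _
      have h1 := hw k l
      have h3 : 0 ≤ w k l * ε * (1 - ε) := mul_nonneg (by positivity) (by linarith)
      have h4 : 0 ≤ w k l * ε * (μ k l + |μ k l|) := by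
        have h5 := neg_abs_le (μ k l)
        have h6 : 0 ≤ μ k l + |μ k l| := by linarith
        exact mul_nonneg (by positivity) h6
      nlinarith [h3, h4]
    calc ∑ l ∈ univ.filter (fun l : Fin L => (l : ℕ) < M ∧ μ k l ≤ 0),
          w k l * (μ k l - ε) ^ 2
        ≤ ∑ l ∈ univ.filter (fun l : Fin L => (l : ℕ) < M ∧ μ k l ≤ 0),
          (w k l * (μ k l) ^ 2 + ε * (w k l * (1 + 2 * |μ k l|))) :=
          Finset.sum_le_sum hterm
      _ = (∑ l ∈ univ.filter (fun l : Fin L => (l : ℕ) < M ∧ μ k l ≤ 0),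
            w k l * (μ k l) ^ 2)
          + ε * ∑ l ∈ univ.filter (fun l : Fin L => (l : ℕ) < M ∧ μ k l ≤ 0),
            w k l * (1 + 2 * |μ k l|) := by
          rw [Finset.sum_add_distrib, Finset.mul_sum]
      _ ≤ _ := by
          gcongr
          exact Finset.sum_le_sum_of_subset_of_nonneg (Finset.filter_subset _ _)
            (fun l _ _ => mul_nonneg (hw k l) (by positivity))
  have heq : ∑ l ∈ univ.filter (fun l : Fin L => (l : ℕ) < M ∧ μ k l ≤ 0),
      w k l * (μ k l) ^ 2
      = ∑ l ∈ univ.filter (fun l : Fin L => (l : ℕ) < M ∧ μ k l < 0),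
      w k l * (μ k l) ^ 2 := by
    symm
    apply Finset.sum_subset
    · intro l hl
      rw [Finset.mem_filter] at hl ⊢
      exact ⟨hl.1, hl.2.1, hl.2.2.le⟩
    · intro l hl hnl
      rw [Finset.mem_filter] at hl hnl
      have h0 : μ k l = 0 := by
        rcases lt_or_eq_of_le hl.2.2 with h | h
        · exact absurd ⟨hl.1, hl.2.1, h⟩ hnl
        · exact h
      rw [h0]; ring
  have hεB : ε * B ≤ δ := by
    have h5 : ε * B ≤ (δ / (B + 1)) * B := mul_le_mul_of_nonneg_right hε2 hB
    have h6 : (δ / (B + 1)) * B ≤ δ := by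
      rw [div_mul_eq_mul_div, div_le_iff₀ (by linarith)]
      nlinarith
    linarith
  rw [heq] at step1
  linarith

/-- Pointwise value of the inner infimum, for `w` with nonnegative entries. -/
lemma sInf_wDist_eq_gInfeas {K L M : ℕ} (hK : 2 ≤ K) (q : Fin L → ℝ)
    (μ : Fin K → Fin L → ℝ) (hμ : isBestArm M q μ (none : Option (Fin K)))
    (w : Fin K → Fin L → ℝ) (hw : ∀ k l, 0 ≤ w k l) :
    sInf (wDist w μ '' Alt M q (none : Option (Fin K))) = gInfeas M μ w := by
  have hKpos : 0 < K := by omega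
  haveI : NeZero K := ⟨by omega⟩
  set S : Fin K → ℝ := fun k =>
    ∑ l ∈ univ.filter (fun l : Fin L => (l : ℕ) < M ∧ μ k l < 0),
      w k l * (μ k l) ^ 2 with hS
  have hgS : gInfeas M μ w = ⨅ k, S k := rfl
  have hbdd : BddBelow (Set.range S) := Set.Finite.bddBelow (Set.finite_range S)
  have hlb : ∀ v ∈ wDist w μ '' Alt M q (none : Option (Fin K)), gInfeas M μ w ≤ v := by
    rintro v ⟨lam, ⟨b, hb, hbne⟩, rfl⟩
    obtain ⟨k, rfl⟩ : ∃ k, b = some k := by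
      cases b with
      | none => exact absurd rfl hbne
      | some k => exact ⟨k, rfl⟩
    obtain ⟨hpos, -⟩ := hb
    have h1 : gInfeas M μ w ≤ S k := by
      rw [hgS]; exact ciInf_le hbdd k
    have h2 : S k ≤ ∑ l, w k l * (μ k l - lam k l) ^ 2 := by
      refine le_trans (Finset.sum_le_sum ?_)
        (Finset.sum_le_sum_of_subset_of_nonneg (Finset.filter_subset _ _)
          (fun l _ _ => mul_nonneg (hw k l) (sq_nonneg _)))
      intro l hl
      rw [Finset.mem_filter] at hl
      have hneg := hl.2.2
      have hp := hpos l hl.2.1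
      have h6 := hw k l
      nlinarith [mul_nonneg (mul_nonneg h6 hp.le) (by linarith : (0:ℝ) ≤ lam k l - 2 * μ k l)]
    have h3 : (∑ l, w k l * (μ k l - lam k l) ^ 2) ≤ wDist w μ lam := by
      rw [wDist]
      exact Finset.single_le_sum
        (f := fun j => ∑ l, w j l * (μ j l - lam j l) ^ 2)
        (fun j _ => Finset.sum_nonneg fun l _ =>
          mul_nonneg (hw j l) (sq_nonneg _)) (Finset.mem_univ k)
    exact h1.trans (h2.trans h3)
  have hne : (wDist w μ '' Alt M q (none : Option (Fin K))).Nonempty := by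
    obtain ⟨lam, hlam, -⟩ := exists_alt_close q μ hμ w hw ⟨0, hKpos⟩ one_pos
    exact ⟨wDist w μ lam, Set.mem_image_of_mem _ hlam⟩
  refine le_antisymm ?_ (le_csInf hne hlb)
  rw [hgS]
  refine le_ciInf fun k => ?_
  refine le_of_forall_pos_le_add fun δ hδ => ?_
  obtain ⟨lam, hlam, hbound⟩ := exists_alt_close q μ hμ w hw k hδ
  exact (csInf_le ⟨gInfeas M μ w, hlb⟩ (Set.mem_image_of_mem _ hlam)).trans hbound


/-- Theorem 2, case `k*(μ)=0`: the sup-inf characterization of `T*(μ)⁻¹` (without the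
factor 1/2) equals the max-min of the infeasibility sums, and the supremum is attained. -/
theorem supInf_eq_maxMin_of_noFeasible {K L M : ℕ} (hK : 2 ≤ K) (hM : 1 ≤ M) (hML : M ≤ L)
    (q : Fin L → ℝ) (μ : Fin K → Fin L → ℝ)
    (hμ : isBestArm M q μ (none : Option (Fin K))) :
    sSup ((fun w => sInf (wDist w μ '' Alt M q (none : Option (Fin K)))) '' simplex K L)
        = sSup ((fun w => gInfeas M μ w) '' simplex K L) ∧
      ∃ w ∈ simplex K L,
        sInf (wDist w μ '' Alt M q (none : Option (Fin K)))
          = sSup ((fun w => sInf (wDist w μ '' Alt M q (none : Option (Fin K)))) ''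
              simplex K L) := by
  have hKpos : 0 < K := by omega
  have hLpos : 0 < L := by omega
  haveI : NeZero K := ⟨by omega⟩
  have himg : (fun w => sInf (wDist w μ '' Alt M q (none : Option (Fin K)))) '' simplex K L
      = (fun w => gInfeas M μ w) '' simplex K L :=
    Set.image_congr fun w hw => sInf_wDist_eq_gInfeas hK q μ hμ w hw.1
  have hclosed : IsClosed (simplex K L) := by
    have h1 : IsClosed {w : Fin K → Fin L → ℝ | ∀ k l, 0 ≤ w k l} := by
      simp only [Set.setOf_forall]
      exact isClosed_iInter fun k => isClosed_iInter fun l =>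
        isClosed_le continuous_const ((continuous_apply l).comp (continuous_apply k))
    have h2 : IsClosed {w : Fin K → Fin L → ℝ | ∑ k, ∑ l, w k l = 1} :=
      isClosed_eq (by fun_prop) continuous_const
    exact h1.inter h2
  have hsub : simplex K L ⊆ Metric.closedBall 0 1 := by
    intro w hw
    rw [Metric.mem_closedBall, dist_zero_right]
    rw [pi_norm_le_iff_of_nonneg zero_le_one]
    intro k
    rw [pi_norm_le_iff_of_nonneg zero_le_one]
    intro l
    rw [Real.norm_eq_abs, abs_le]
    constructor
    · linarith [hw.1 k l]
    · calc w k l ≤ ∑ l', w k l' :=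
            Finset.single_le_sum (fun l' _ => hw.1 k l') (Finset.mem_univ l)
        _ ≤ ∑ k', ∑ l', w k' l' :=
            Finset.single_le_sum (fun k' _ => Finset.sum_nonneg fun l' _ => hw.1 k' l')
              (Finset.mem_univ k)
        _ = 1 := hw.2
  have hcompact : IsCompact (simplex K L) :=
    (isCompact_closedBall 0 1).of_isClosed_subset hclosed hsub
  have hnes : (simplex K L).Nonempty := by
    refine ⟨fun _ _ => ((K * L : ℕ) : ℝ)⁻¹, fun k l => by positivity, ?_⟩
    have hKL : ((K * L : ℕ) : ℝ) ≠ 0 := by positivity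
    simp only [Finset.sum_const, Finset.card_univ, Fintype.card_fin, nsmul_eq_mul]
    push_cast at hKL ⊢
    field_simp
  have hcont : ContinuousOn (fun w => gInfeas M μ w) (simplex K L) := by
    have hrw : (fun w : Fin K → Fin L → ℝ => gInfeas M μ w)
        = fun w => Finset.univ.inf' Finset.univ_nonempty
            (fun k : Fin K => ∑ l ∈ univ.filter (fun l : Fin L => (l : ℕ) < M ∧ μ k l < 0),
              w k l * (μ k l) ^ 2) := by
      funext w
      exact ciInf_eq_inf'_univ _
    rw [hrw]
    apply Continuous.continuousOn
    apply Continuous.finset_inf'_apply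
    intro k _
    apply continuous_finset_sum
    intro l _
    exact (((continuous_apply l).comp (continuous_apply k) :
      Continuous fun w : Fin K → Fin L → ℝ => w k l)).mul continuous_const
  obtain ⟨w₀, hw₀, hmax⟩ := hcompact.exists_sSup_image_eq hnes hcont
  refine ⟨by rw [himg], w₀, hw₀, ?_⟩
  rw [sInf_wDist_eq_gInfeas hK q μ hμ w₀ hw₀.1, himg, hmax]
end
end

section
/- Let μ ∈ S satisfy C(μ) = ∅ (so k*(μ) = 0). Then for every w ∈ Σ_{K×L}, inf_{λ ∈ Alt(μ)} Σ_{k∈[K]} Σ_{l∈[L]} w_{k,l}(μ_{k,l} − λ_{k,l})² = min_{k∈[K]} Σ_{l∈[M], μ_{k,l}<0} w_{k,l} μ_{k,l}². -/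
open Finset Set

noncomputable section

/-- Case `k*(μ)=0` of the inner infimum computation: for every `w ∈ Σ_{K×L}`,
`inf_{λ ∈ Alt(μ)} Σ_{k,l} w_{k,l}(μ_{k,l}-λ_{k,l})² = min_k Σ_{l∈[M],μ_{k,l}<0} w_{k,l}μ_{k,l}²`. -/
theorem inf_alt_eq_of_noFeasible {K L M : ℕ} (hK : 2 ≤ K) (hM : 1 ≤ M) (hML : M ≤ L)
    (q : Fin L → ℝ) (μ : Fin K → Fin L → ℝ)
    (hμ : isBestArm M q μ (none : Option (Fin K))) :
    ∀ w ∈ simplex K L,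
      sInf (wDist w μ '' Alt M q (none : Option (Fin K))) = gInfeas M μ w := by
  intro w hw
  obtain ⟨hw0, hw1⟩ := hw
  haveI : Nonempty (Fin K) := ⟨⟨0, by omega⟩⟩
  set S : Fin K → ℝ := fun k =>
    ∑ l ∈ univ.filter (fun l : Fin L => (l : ℕ) < M ∧ μ k l < 0),
      w k l * (μ k l) ^ 2 with hS
  have hgS : gInfeas M μ w = ⨅ k, S k := rfl
  -- lower bound on every element of the image
  have hbd : ∀ v ∈ wDist w μ '' Alt M q (none : Option (Fin K)), gInfeas M μ w ≤ v := by
    rintro v ⟨lam, ⟨b, hb, hbne⟩, rfl⟩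
    obtain ⟨k, rfl⟩ : ∃ k, b = some k := by
      cases b with
      | none => simp at hbne
      | some k => exact ⟨k, rfl⟩
    obtain ⟨hpos, -⟩ := hb
    have h1 : gInfeas M μ w ≤ S k := by
      rw [hgS]; exact ciInf_le (Set.Finite.bddBelow (Set.finite_range _)) k
    refine h1.trans ?_
    have h2 : S k ≤ ∑ l, w k l * (μ k l - lam k l) ^ 2 := by
      have hsub : S k ≤ ∑ l ∈ univ.filter (fun l : Fin L => (l : ℕ) < M ∧ μ k l < 0),
          w k l * (μ k l - lam k l) ^ 2 := by
        apply Finset.sum_le_sum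
        intro l hl
        simp only [Finset.mem_filter] at hl
        have hp := hpos l hl.2.1
        have hneg := hl.2.2
        have hsq : μ k l ^ 2 ≤ (μ k l - lam k l) ^ 2 := by nlinarith
        exact mul_le_mul_of_nonneg_left hsq (hw0 k l)
      refine hsub.trans ?_
      apply Finset.sum_le_sum_of_subset_of_nonneg (Finset.filter_subset _ _)
      intro l _ _
      exact mul_nonneg (hw0 k l) (sq_nonneg _)
    refine h2.trans ?_
    unfold wDist
    apply Finset.single_le_sum (f := fun j => ∑ l, w j l * (μ j l - lam j l) ^ 2)
      (fun j _ => ?_) (Finset.mem_univ k)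
    apply Finset.sum_nonneg
    intro l _
    exact mul_nonneg (hw0 _ l) (sq_nonneg _)
  -- the perturbed models
  have hAlt : ∀ (k : Fin K) (ε : ℝ), 0 < ε →
      (fun j (l : Fin L) => if j = k ∧ (l : ℕ) < M then max (μ k l) 0 + ε else μ j l)
        ∈ Alt M q (none : Option (Fin K)) := by
    intro k ε hε
    refine ⟨some k, ⟨?_, ?_⟩, by simp⟩
    · intro l hl
      show 0 < if k = k ∧ (l : ℕ) < M then max (μ k l) 0 + ε else μ k l
      rw [if_pos ⟨rfl, hl⟩]
      have : (0:ℝ) ≤ max (μ k l) 0 := le_max_right _ _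
      linarith
    · intro j hj hfeas
      obtain ⟨l, hlM, hlneg⟩ := hμ j
      have := hfeas l hlM
      simp only [hj, false_and, if_neg, not_false_iff] at this
      exact absurd this (not_le.mpr hlneg)
  have hne : (wDist w μ '' Alt M q (none : Option (Fin K))).Nonempty :=
    ⟨_, Set.mem_image_of_mem _ (hAlt ⟨0, by omega⟩ 1 one_pos)⟩
  -- value of wDist at the perturbed model
  have hval : ∀ (k : Fin K) (ε : ℝ),
      wDist w μ (fun j (l : Fin L) => if j = k ∧ (l : ℕ) < M then max (μ k l) 0 + ε else μ j l)
        = ∑ l : Fin L, (if (l : ℕ) < M then w k l * (μ k l - (max (μ k l) 0 + ε)) ^ 2 else 0) := by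
    intro k ε
    unfold wDist
    rw [Finset.sum_eq_single_of_mem k (Finset.mem_univ k)]
    · apply Finset.sum_congr rfl
      intro l _
      by_cases hl : (l : ℕ) < M
      · simp [hl]
      · simp [hl]
    · intro j _ hj
      apply Finset.sum_eq_zero
      intro l _
      simp [hj]
  have key : ∀ k : Fin K, sInf (wDist w μ '' Alt M q (none : Option (Fin K))) ≤ S k := by
    intro k
    have hcont : Filter.Tendsto
        (fun ε : ℝ => ∑ l : Fin L, (if (l : ℕ) < M then w k l * (μ k l - (max (μ k l) 0 + ε)) ^ 2 else 0))
        (nhdsWithin 0 (Set.Ioi 0)) (nhds (S k)) := by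
      have hc : Continuous (fun ε : ℝ =>
          ∑ l : Fin L, (if (l : ℕ) < M then w k l * (μ k l - (max (μ k l) 0 + ε)) ^ 2 else 0)) := by
        apply continuous_finset_sum
        intro l _
        by_cases hl : (l : ℕ) < M
        · simp only [hl, if_true]; fun_prop
        · simp only [hl, if_false]; fun_prop
      have h0 : (∑ l : Fin L, (if (l : ℕ) < M then w k l * (μ k l - (max (μ k l) 0 + 0)) ^ 2 else 0))
          = S k := by
        have hSk : S k = ∑ l : Fin L,
            (if (l : ℕ) < M ∧ μ k l < 0 then w k l * μ k l ^ 2 else 0) := by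
          rw [hS]; exact Finset.sum_filter _ _
        rw [hSk]
        apply Finset.sum_congr rfl
        intro l _
        by_cases h1 : (l : ℕ) < M
        · by_cases h2 : μ k l < 0
          · rw [if_pos h1, if_pos ⟨h1, h2⟩, max_eq_right h2.le]; ring
          · rw [if_pos h1, if_neg (by tauto), max_eq_left (not_lt.1 h2)]; ring
        · rw [if_neg h1, if_neg (by tauto)]
      have := hc.tendsto 0
      rw [h0] at this
      exact this.mono_left nhdsWithin_le_nhds
    refine ge_of_tendsto hcont ?_
    filter_upwards [self_mem_nhdsWithin] with ε hε
    rw [← hval k ε]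
    exact csInf_le ⟨gInfeas M μ w, hbd⟩ (Set.mem_image_of_mem _ (hAlt k ε hε))
  refine le_antisymm ?_ (le_csInf hne hbd)
  rw [hgS]
  exact le_ciInf key
end
end

section
/- For every μ ∈ S, there exist w ∈ Σ_{K×L} and ε > 0 such that Σ_{k∈[K]} Σ_{l∈[L]} w_{k,l}(μ_{k,l} − λ_{k,l})² ≥ ε for every λ ∈ Alt(μ); that is, sup_{w ∈ Σ_{K×L}} inf_{λ ∈ Alt(μ)} Σ_{k,l} w_{k,l}(μ_{k,l} − λ_{k,l})² > 0. -/
open Finset Set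

noncomputable section

private lemma single_le_wDist {K L : ℕ} (w μ lam : Fin K → Fin L → ℝ)
    (hw : ∀ k l, 0 ≤ w k l) (k : Fin K) (l : Fin L) :
    w k l * (μ k l - lam k l) ^ 2 ≤ wDist w μ lam := by
  unfold wDist
  have h1 : w k l * (μ k l - lam k l) ^ 2 ≤ ∑ l', w k l' * (μ k l' - lam k l') ^ 2 :=
    Finset.single_le_sum (f := fun l' => w k l' * (μ k l' - lam k l') ^ 2)
      (fun l' _ => mul_nonneg (hw k l') (sq_nonneg _)) (Finset.mem_univ l)
  refine h1.trans ?_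
  exact Finset.single_le_sum (f := fun k' => ∑ l', w k' l' * (μ k' l' - lam k' l') ^ 2)
    (fun k' _ => Finset.sum_nonneg fun l' _ =>
    mul_nonneg (hw k' l') (sq_nonneg _)) (Finset.mem_univ k)

private lemma quality_diff_bound {K L : ℕ} (q : Fin L → ℝ) (μ lam : Fin K → Fin L → ℝ)
    (j : Fin K) (t : ℝ) (h : ∀ l, |μ j l - lam j l| ≤ t) :
    |quality q μ j - quality q lam j| ≤ (∑ l, |q l|) * t := by
  have heq : quality q μ j - quality q lam j = ∑ l, q l * (μ j l - lam j l) := by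
    unfold quality
    rw [← Finset.sum_sub_distrib]
    exact Finset.sum_congr rfl fun l _ => by ring
  rw [heq]
  calc |∑ l, q l * (μ j l - lam j l)| ≤ ∑ l, |q l * (μ j l - lam j l)| :=
        Finset.abs_sum_le_sum_abs _ _
    _ ≤ ∑ l, |q l| * t := Finset.sum_le_sum fun l _ => by
        rw [abs_mul]; exact mul_le_mul_of_nonneg_left (h l) (abs_nonneg _)
    _ = (∑ l, |q l|) * t := by rw [Finset.sum_mul]

set_option maxHeartbeats 2000000 in
/-- For every `μ ∈ S` there is a weight vector `w` in the simplex and `ε > 0` such that the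
weighted squared distance from `μ` to every alternative model is at least `ε`; i.e. the
sup-inf in the lower bound is strictly positive. -/
theorem exists_weight_pos_inf {K L M : ℕ} (hK : 2 ≤ K) (hM : 1 ≤ M) (hML : M ≤ L)
    (q : Fin L → ℝ) (μ : Fin K → Fin L → ℝ) (a : Option (Fin K))
    (hμ : isBestArm M q μ a) :
    ∃ w ∈ simplex K L, ∃ ε > (0 : ℝ), ∀ lam ∈ Alt M q a, ε ≤ wDist w μ lam := by
  classical
  have hLpos : 0 < L := by omega
  have hKpos : 0 < K := by omega
  have hKL : (0 : ℝ) < (K : ℝ) * L := by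
    have h1 : (0:ℝ) < K := by exact_mod_cast hKpos
    have h2 : (0:ℝ) < L := by exact_mod_cast hLpos
    positivity
  set c : ℝ := ((K : ℝ) * L)⁻¹ with hc
  have hcpos : 0 < c := inv_pos.mpr hKL
  set w : Fin K → Fin L → ℝ := fun _ _ => c with hwdef
  have hwmem : w ∈ simplex K L := by
    constructor
    · intro k l; exact hcpos.le
    · simp only [hwdef, Finset.sum_const, Finset.card_univ, Fintype.card_fin, smul_eq_mul, hc]
      field_simp
      rw [nsmul_eq_mul, nsmul_eq_mul, ← mul_assoc, one_div, mul_inv_cancel₀ hKL.ne']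
  have hsingle : ∀ (lam : Fin K → Fin L → ℝ) (j : Fin K) (l : Fin L),
      c * (μ j l - lam j l) ^ 2 ≤ wDist w μ lam := fun lam j l =>
    single_le_wDist w μ lam (fun _ _ => hcpos.le) j l
  have hFinK : (Finset.univ : Finset (Fin K)).Nonempty := ⟨⟨0, hKpos⟩, Finset.mem_univ _⟩
  cases a with
  | none =>
    have hμ' : ∀ k : Fin K, ∃ l : Fin L, (l : ℕ) < M ∧ μ k l < 0 := hμ
    have hne : ∀ k : Fin K,
        (Finset.univ.filter fun l : Fin L => (l : ℕ) < M ∧ μ k l < 0).Nonempty := by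
      intro k
      obtain ⟨l, hl1, hl2⟩ := hμ' k
      exact ⟨l, by simp [hl1, hl2]⟩
    set ε0 : Fin K → ℝ := fun k =>
      (Finset.univ.filter fun l : Fin L => (l : ℕ) < M ∧ μ k l < 0).inf' (hne k)
        (fun l => (μ k l) ^ 2) with hε0
    have hε0pos : ∀ k, 0 < ε0 k := by
      intro k
      rw [hε0, Finset.lt_inf'_iff]
      intro l hl
      simp only [Finset.mem_filter] at hl
      have := hl.2.2
      nlinarith
    refine ⟨w, hwmem, c * Finset.univ.inf' hFinK ε0, ?_, ?_⟩
    · have : 0 < Finset.univ.inf' hFinK ε0 := by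
        rw [Finset.lt_inf'_iff]; exact fun k _ => hε0pos k
      exact mul_pos hcpos this
    · intro lam hlam
      obtain ⟨b, hb, hbne⟩ := hlam
      cases b with
      | none => exact absurd rfl hbne
      | some k =>
        obtain ⟨hb1, _⟩ := hb
        obtain ⟨l, hl1, hl2⟩ := hμ' k
        have hpos : 0 < lam k l := hb1 l hl1
        have h1 : (μ k l) ^ 2 ≤ (μ k l - lam k l) ^ 2 := by nlinarith
        have h2 : ε0 k ≤ (μ k l) ^ 2 := by
          rw [hε0]
          exact Finset.inf'_le _ (by simp [hl1, hl2])
        have h3 : Finset.univ.inf' hFinK ε0 ≤ ε0 k := Finset.inf'_le _ (Finset.mem_univ k)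
        calc c * Finset.univ.inf' hFinK ε0 ≤ c * (μ k l - lam k l) ^ 2 := by
              apply mul_le_mul_of_nonneg_left _ hcpos.le
              linarith
          _ ≤ wDist w μ lam := hsingle lam k l
  | some ks =>
    obtain ⟨hμ1, hμ2⟩ := hμ
    set S : ℝ := ∑ l, |q l| with hS
    have hSnn : 0 ≤ S := Finset.sum_nonneg fun l _ => abs_nonneg _
    set Q : ℝ := S + 1 with hQ
    have hQpos : 0 < Q := by rw [hQ]; linarith
    set g : Fin K → ℝ := fun k => quality q μ ks - quality q μ k with hg
    set t : Fin K → ℝ := fun k => g k / (2 * L * Q) with ht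
    have hLR : (0:ℝ) < L := by exact_mod_cast hLpos
    have hneδ : (Finset.univ.filter fun l : Fin L => (l : ℕ) < M).Nonempty :=
      ⟨⟨0, hLpos⟩, by simp; omega⟩
    set δ1 : ℝ := (Finset.univ.filter fun l : Fin L => (l : ℕ) < M).inf' hneδ
      (fun l => (μ ks l) ^ 2) with hδ1
    have hδ1pos : 0 < δ1 := by
      rw [hδ1, Finset.lt_inf'_iff]
      intro l hl
      simp only [Finset.mem_filter] at hl
      have := hμ1 l hl.2
      positivity
    have hbad : ∀ k : Fin K, ¬ feasible M μ k →
        (Finset.univ.filter fun l : Fin L => (l : ℕ) < M ∧ μ k l < 0).Nonempty := by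
      intro k hk
      unfold feasible at hk
      push_neg at hk
      obtain ⟨l, hl1, hl2⟩ := hk
      exact ⟨l, by simp [hl1, hl2]⟩
    set ε0 : Fin K → ℝ := fun k =>
      if k = ks then δ1
      else if hf : feasible M μ k then (t k) ^ 2
      else (Finset.univ.filter fun l : Fin L => (l : ℕ) < M ∧ μ k l < 0).inf' (hbad k hf)
        (fun l => (μ k l) ^ 2) with hε0
    have hε0pos : ∀ k, 0 < ε0 k := by
      intro k
      rw [hε0]
      by_cases hks : k = ks
      · simp [hks, hδ1pos]
      · simp only [hks, if_false]
        by_cases hf : feasible M μ k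
        · rw [dif_pos hf]
          have hgk : 0 < g k := by
            rw [hg]; simp only []; linarith [hμ2 k hks hf]
          have htk : 0 < t k := by
            rw [ht]; exact div_pos hgk (by positivity)
          positivity
        · rw [dif_neg hf, Finset.lt_inf'_iff]
          intro l hl
          simp only [Finset.mem_filter] at hl
          have := hl.2.2
          nlinarith
    refine ⟨w, hwmem, c * Finset.univ.inf' hFinK ε0, ?_, ?_⟩
    · have : 0 < Finset.univ.inf' hFinK ε0 := by
        rw [Finset.lt_inf'_iff]; exact fun k _ => hε0pos k
      exact mul_pos hcpos this
    · intro lam hlam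
      obtain ⟨b, hb, hbne⟩ := hlam
      have main : ∀ (k0 j : Fin K) (l : Fin L), ε0 k0 ≤ (μ j l - lam j l) ^ 2 →
          c * Finset.univ.inf' hFinK ε0 ≤ wDist w μ lam := by
        intro k0 j l h
        have h3 : Finset.univ.inf' hFinK ε0 ≤ ε0 k0 := Finset.inf'_le _ (Finset.mem_univ k0)
        calc c * Finset.univ.inf' hFinK ε0 ≤ c * (μ j l - lam j l) ^ 2 := by
              apply mul_le_mul_of_nonneg_left _ hcpos.le
              linarith
          _ ≤ wDist w μ lam := hsingle lam j l
      have ksCase : ¬ feasible M lam ks → c * Finset.univ.inf' hFinK ε0 ≤ wDist w μ lam := by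
        intro hfl
        unfold feasible at hfl
        push_neg at hfl
        obtain ⟨l, hl1, hl2⟩ := hfl
        have hpos : 0 < μ ks l := hμ1 l hl1
        apply main ks ks l
        have h2 : ε0 ks ≤ (μ ks l) ^ 2 := by
          rw [hε0]
          simp only [if_pos rfl]
          exact (Finset.inf'_le _ (by simp [hl1]) : δ1 ≤ (μ ks l) ^ 2)
        nlinarith
      cases b with
      | none =>
        have hb' : ∀ k : Fin K, ∃ l : Fin L, (l : ℕ) < M ∧ lam k l < 0 := hb
        apply ksCase
        intro hfl
        obtain ⟨l, hl1, hl2⟩ := hb' ks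
        exact absurd (hfl l hl1) (not_le.mpr hl2)
      | some k =>
        have hk : k ≠ ks := fun h => hbne (by rw [h])
        obtain ⟨hb1, hb2⟩ := hb
        by_cases hfl : feasible M lam ks
        · have hql : quality q lam ks < quality q lam k := hb2 ks (Ne.symm hk) hfl
          by_cases hfk : feasible M μ k
          · -- gap argument
            have hgk : 0 < g k := by
              rw [hg]; simp only []; linarith [hμ2 k hk hfk]
            have htk : 0 < t k := by
              rw [ht]; exact div_pos hgk (by positivity)
            have hex : ∃ (j : Fin K) (l : Fin L), (t k) ^ 2 ≤ (μ j l - lam j l) ^ 2 := by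
              by_contra hcon
              push_neg at hcon
              have habs : ∀ (j : Fin K) (l : Fin L), |μ j l - lam j l| ≤ t k := by
                intro j l
                have := hcon j l
                nlinarith [sq_abs (μ j l - lam j l), abs_nonneg (μ j l - lam j l)]
              have hb1' : |quality q μ ks - quality q lam ks| ≤ S * t k :=
                quality_diff_bound q μ lam ks (t k) (fun l => habs ks l)
              have hb2' : |quality q μ k - quality q lam k| ≤ S * t k :=
                quality_diff_bound q μ lam k (t k) (fun l => habs k l)
              have e1 : quality q μ ks - quality q lam ks ≤ S * t k := le_of_abs_le hb1'
              have e2 : quality q lam k - quality q μ k ≤ S * t k := by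
                have := neg_abs_le (quality q μ k - quality q lam k)
                linarith [le_of_abs_le hb2', abs_nonneg (quality q μ k - quality q lam k),
                  neg_le_of_abs_le hb2']
              -- g k ≤ 2 S t k, and t k = g k / (2 L Q)
              have hgle : g k ≤ 2 * S * t k := by
                rw [hg]; simp only []
                linarith
              have htval : t k * (2 * L * Q) = g k := by
                rw [ht]
                exact div_mul_cancel₀ _ (by positivity)
              have hL1 : (1:ℝ) ≤ L := by exact_mod_cast hLpos
              have hLQ : S + 1 ≤ (L:ℝ) * Q := by nlinarith
              nlinarith [mul_le_mul_of_nonneg_left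
                (show 2*(S+1) ≤ 2*((L:ℝ)*Q) by linarith) htk.le, htval, hgle, htk]
            obtain ⟨j, l, hjl⟩ := hex
            apply main k j l
            have : ε0 k = (t k) ^ 2 := by
              rw [hε0]; simp only [if_neg hk, dif_pos hfk]
            linarith [this ▸ hjl]
          · have hfk' : ∃ l : Fin L, (l : ℕ) < M ∧ μ k l < 0 := by
              unfold feasible at hfk
              push_neg at hfk
              exact hfk
            obtain ⟨l, hl1, hl2⟩ := hfk'
            have hpos : 0 < lam k l := hb1 l hl1
            apply main k k l
            have h2 : ε0 k ≤ (μ k l) ^ 2 := by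
              rw [hε0]
              simp only [if_neg hk, dif_neg hfk]
              exact Finset.inf'_le _ (by simp [hl1, hl2])
            nlinarith
        · exact ksCase hfl
end
end

section
/- Let μ ∈ S satisfy k* = k*(μ) ∈ [K]. Then the function F_μ : Σ_{K×L} → ℝ defined by F_μ(w) = min(f^opt_μ(w), f^fea_μ(w)) is concave and continuous on the simplex Σ_{K×L}. -/
open Finset Set

noncomputable section

namespace BanditHelper

variable {K L : ℕ}

def pairW (w c : Fin K → Fin L → ℝ) : ℝ := ∑ k, ∑ l, w k l * c k l

lemma pairW_nonneg {w c : Fin K → Fin L → ℝ} (hw : ∀ k l, 0 ≤ w k l)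
    (hc : ∀ k l, 0 ≤ c k l) : 0 ≤ pairW w c :=
  Finset.sum_nonneg fun k _ => Finset.sum_nonneg fun l _ => mul_nonneg (hw k l) (hc k l)

lemma pairW_smul_add (a b : ℝ) (x y c : Fin K → Fin L → ℝ) :
    pairW (a • x + b • y) c = a * pairW x c + b * pairW y c := by
  simp only [pairW, Finset.mul_sum, ← Finset.sum_add_distrib]
  refine Finset.sum_congr rfl fun k _ => Finset.sum_congr rfl fun l _ => ?_
  simp only [Pi.add_apply, Pi.smul_apply, smul_eq_mul]
  ring

lemma continuous_pairW (c : Fin K → Fin L → ℝ) :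
    Continuous fun w : Fin K → Fin L → ℝ => pairW w c := by
  unfold pairW
  exact continuous_finset_sum _ fun k _ => continuous_finset_sum _ fun l _ =>
    (by fun_prop)

lemma convex_simplex : Convex ℝ (simplex K L) := by
  intro x hx y hy a b ha hb hab
  refine ⟨fun k l => ?_, ?_⟩
  · have := hx.1 k l; have := hy.1 k l
    simp only [Pi.add_apply, Pi.smul_apply, smul_eq_mul]
    positivity
  · have : ∑ k, ∑ l, (a • x + b • y) k l
        = a * (∑ k, ∑ l, x k l) + b * (∑ k, ∑ l, y k l) := by
      simp only [Finset.mul_sum, ← Finset.sum_add_distrib]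
      refine Finset.sum_congr rfl fun k _ => Finset.sum_congr rfl fun l _ => ?_
      simp only [Pi.add_apply, Pi.smul_apply, smul_eq_mul]
    rw [this, hx.2, hy.2]; linarith

/-- `sInf` of the pairings against a coefficient set. -/
def sInfP (C : Set (Fin K → Fin L → ℝ)) (w : Fin K → Fin L → ℝ) : ℝ :=
  sInf ((fun c => pairW w c) '' C)

variable {C : Set (Fin K → Fin L → ℝ)}

lemma bddBelow_pairs (hnn : ∀ c ∈ C, ∀ k l, 0 ≤ c k l) {w : Fin K → Fin L → ℝ}
    (hw : ∀ k l, 0 ≤ w k l) : BddBelow ((fun c => pairW w c) '' C) := by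
  refine ⟨0, ?_⟩
  rintro v ⟨c, hc, rfl⟩
  exact pairW_nonneg hw (hnn c hc)

lemma sInfP_nonneg (hne : C.Nonempty) (hnn : ∀ c ∈ C, ∀ k l, 0 ≤ c k l)
    {w : Fin K → Fin L → ℝ} (hw : ∀ k l, 0 ≤ w k l) : 0 ≤ sInfP C w := by
  refine le_csInf (hne.image _) ?_
  rintro v ⟨c, hc, rfl⟩
  exact pairW_nonneg hw (hnn c hc)

lemma sInfP_le (hnn : ∀ c ∈ C, ∀ k l, 0 ≤ c k l) {w : Fin K → Fin L → ℝ}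
    (hw : ∀ k l, 0 ≤ w k l) {c : Fin K → Fin L → ℝ} (hc : c ∈ C) :
    sInfP C w ≤ pairW w c :=
  csInf_le (bddBelow_pairs hnn hw) (Set.mem_image_of_mem _ hc)

lemma concaveOn_sInfP (hne : C.Nonempty) (hnn : ∀ c ∈ C, ∀ k l, 0 ≤ c k l) :
    ConcaveOn ℝ (simplex K L) (sInfP C) := by
  refine ⟨convex_simplex, fun x hx y hy a b ha hb hab => ?_⟩
  refine le_csInf (hne.image _) ?_
  rintro v ⟨c, hc, rfl⟩
  show a • sInfP C x + b • sInfP C y ≤ pairW (a • x + b • y) c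
  rw [pairW_smul_add]
  have h1 := sInfP_le hnn hx.1 hc
  have h2 := sInfP_le hnn hy.1 hc
  simp only [smul_eq_mul]
  have := mul_le_mul_of_nonneg_left h1 ha
  have := mul_le_mul_of_nonneg_left h2 hb
  linarith

lemma continuousOn_sInfP (hKL : Nonempty (Fin K × Fin L)) (hne : C.Nonempty)
    (hnn : ∀ c ∈ C, ∀ k l, 0 ≤ c k l) :
    ContinuousOn (sInfP C) (simplex K L) := by
  intro w0 hw0
  rw [Metric.continuousWithinAt_iff]
  intro ε hε
  -- approximating linear function
  obtain ⟨v, ⟨c, hc, rfl⟩, hv⟩ :=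
    Real.lt_sInf_add_pos (hne.image (fun c => pairW w0 c)) (by linarith : (0:ℝ) < ε/4)
  obtain ⟨δ1, hδ1, hg⟩ := Metric.continuous_iff.1 (continuous_pairW c) w0 (ε/4) (by linarith)
  -- minimal positive coordinate
  set m : ℝ := Finset.univ.inf' (by simpa using Finset.univ_nonempty)
    (fun p : Fin K × Fin L => if 0 < w0 p.1 p.2 then w0 p.1 p.2 else 1) with hm_def
  have hm : 0 < m := by
    rw [hm_def, Finset.lt_inf'_iff]
    intro p _
    split_ifs with h
    · exact h
    · norm_num
  have hm_le : ∀ k l, 0 < w0 k l → m ≤ w0 k l := by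
    intro k l h
    have := Finset.inf'_le (fun p : Fin K × Fin L =>
      if 0 < w0 p.1 p.2 then w0 p.1 p.2 else 1) (Finset.mem_univ (k, l))
    rw [if_pos h] at this
    exact this
  have hf0 : 0 ≤ sInfP C w0 := sInfP_nonneg hne hnn hw0.1
  set t : ℝ := min ((ε/2) / (sInfP C w0 + 1)) 1 with ht_def
  have ht0 : 0 < t := by
    rw [ht_def]
    refine lt_min (by positivity) one_pos
  have ht1 : t ≤ 1 := min_le_right _ _
  have htf : t * sInfP C w0 ≤ ε/2 := by
    have h1 : t ≤ (ε/2) / (sInfP C w0 + 1) := min_le_left _ _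
    have h2 : t * sInfP C w0 ≤ ((ε/2) / (sInfP C w0 + 1)) * sInfP C w0 :=
      mul_le_mul_of_nonneg_right h1 hf0
    have h3 : ((ε/2) / (sInfP C w0 + 1)) * sInfP C w0 ≤ ε/2 := by
      rw [div_mul_eq_mul_div, div_le_iff₀ (by linarith)]
      nlinarith
    linarith
  refine ⟨min δ1 (t * m), lt_min hδ1 (by positivity), ?_⟩
  intro w hw hdist
  have hdist1 : dist w w0 < δ1 := lt_of_lt_of_le hdist (min_le_left _ _)
  have hdist2 : dist w w0 < t * m := lt_of_lt_of_le hdist (min_le_right _ _)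
  have hcoord : ∀ k l, |w k l - w0 k l| ≤ dist w w0 := by
    intro k l
    have h1 : dist (w k l) (w0 k l) ≤ dist (w k) (w0 k) := dist_le_pi_dist _ _ _
    have h2 : dist (w k) (w0 k) ≤ dist w w0 := dist_le_pi_dist _ _ _
    rw [Real.dist_eq] at h1
    linarith
  -- upper bound
  have hupper : sInfP C w < sInfP C w0 + ε/2 := by
    have h1 : sInfP C w ≤ pairW w c := sInfP_le hnn hw.1 hc
    have h2 := hg w hdist1
    rw [Real.dist_eq, abs_sub_lt_iff] at h2
    have h3 := h2.1
    have hv' : pairW w0 c < sInfP C w0 + ε / 4 := hv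
    linarith
  -- lower bound via concavity
  set z : Fin K → Fin L → ℝ := fun k l => w0 k l + (w k l - w0 k l) / t with hz_def
  have hz : z ∈ simplex K L := by
    constructor
    · intro k l
      by_cases h : 0 < w0 k l
      · have h1 := hm_le k l h
        have h2 := hcoord k l
        have h3 : |w k l - w0 k l| < t * w0 k l :=
          lt_of_le_of_lt h2 (lt_of_lt_of_le hdist2 (mul_le_mul_of_nonneg_left h1 ht0.le))
        rw [abs_lt] at h3
        rw [hz_def]
        have : -(w0 k l) < (w k l - w0 k l) / t := by
          rw [lt_div_iff₀ ht0]
          nlinarith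
        linarith
      · have h0 : w0 k l = 0 := le_antisymm (not_lt.1 h) (hw0.1 k l)
        rw [hz_def]
        simp only [h0, sub_zero, zero_add]
        exact div_nonneg (hw.1 k l) ht0.le
    · have hinner : ∀ k : Fin K, ∑ l, z k l
          = (∑ l, w0 k l) + ((∑ l, w k l) - ∑ l, w0 k l) * t⁻¹ := by
        intro k
        simp only [hz_def, div_eq_mul_inv]
        rw [Finset.sum_add_distrib, ← Finset.sum_mul, Finset.sum_sub_distrib]
      have houter : ∑ k, ∑ l, z k l
          = (∑ k, ∑ l, w0 k l) + ((∑ k, ∑ l, w k l) - ∑ k, ∑ l, w0 k l) * t⁻¹ := by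
        simp only [hinner]
        rw [Finset.sum_add_distrib, ← Finset.sum_mul, Finset.sum_sub_distrib]
      rw [houter, hw.2, hw0.2]; ring
  have htne : t ≠ 0 := ne_of_gt ht0
  have hcombo : w = (1 - t) • w0 + t • z := by
    funext k l
    simp only [Pi.add_apply, Pi.smul_apply, smul_eq_mul, hz_def]
    rw [mul_add, mul_div_cancel₀ _ htne]
    ring
  have hconc := (concaveOn_sInfP hne hnn).2 hw0 hz
    (show (0:ℝ) ≤ 1 - t by linarith) ht0.le (show (1 - t) + t = 1 by ring)
  rw [← hcombo] at hconc
  simp only [smul_eq_mul] at hconc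
  have hzpos : 0 ≤ sInfP C z := sInfP_nonneg hne hnn hz.1
  have hlower : sInfP C w0 - ε/2 ≤ sInfP C w := by nlinarith
  rw [Real.dist_eq, abs_sub_lt_iff]
  constructor <;> linarith



/-- Coefficient vectors for the feasibility part. -/
def cFeaSet (M : ℕ) (μ : Fin K → Fin L → ℝ) (ks : Fin K) :
    Set (Fin K → Fin L → ℝ) :=
  ⋃ l : {l : Fin L // (l : ℕ) < M},
    {fun k' l' => if k' = ks ∧ l' = l.1 then (μ ks l.1) ^ 2 else 0}

/-- Coefficient vector associated to an alternative model `lam`. -/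
def cOf (μ : Fin K → Fin L → ℝ) (ks k : Fin K) (lam : Fin K → Fin L → ℝ) :
    Fin K → Fin L → ℝ :=
  fun k' l' => if k' = ks then (μ ks l' - lam ks l') ^ 2
    else if k' = k then (μ k l' - lam k l') ^ 2 else 0

/-- Coefficient vectors for the optimality part, arm `k`. -/
def cOptSet (M : ℕ) (q : Fin L → ℝ) (μ : Fin K → Fin L → ℝ) (ks k : Fin K) :
    Set (Fin K → Fin L → ℝ) :=
  {c | ∃ lam : Fin K → Fin L → ℝ, quality q lam ks ≤ quality q lam k ∧
    (∀ l : Fin L, (l : ℕ) < M → 0 ≤ lam k l) ∧ c = cOf μ ks k lam}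

/-- All coefficient vectors. -/
def cAll (M : ℕ) (q : Fin L → ℝ) (μ : Fin K → Fin L → ℝ) (ks : Fin K) :
    Set (Fin K → Fin L → ℝ) :=
  (⋃ k : {k : Fin K // k ≠ ks}, cOptSet M q μ ks k.1) ∪ cFeaSet M μ ks

lemma pairW_row (w : Fin K → Fin L → ℝ) (j : Fin K) (f : Fin L → ℝ) :
    pairW w (fun k' l' => if k' = j then f l' else 0) = ∑ l, w j l * f l := by
  unfold pairW
  rw [Finset.sum_eq_single_of_mem j (Finset.mem_univ j)]
  · simp
  · intro b _ hb
    simp [hb]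

lemma pairW_single (w : Fin K → Fin L → ℝ) (ks : Fin K) (l : Fin L) (A : ℝ) :
    pairW w (fun k' l' => if k' = ks ∧ l' = l then A else 0) = w ks l * A := by
  have h : (fun k' l' => if k' = ks ∧ l' = l then A else 0)
      = fun (k' : Fin K) (l' : Fin L) => if k' = ks then (if l' = l then A else 0) else 0 := by
    funext k' l'
    by_cases h1 : k' = ks <;> by_cases h2 : l' = l <;> simp [h1, h2]
  rw [h, pairW_row]
  rw [Finset.sum_eq_single_of_mem l (Finset.mem_univ l)]
  · simp
  · intro b _ hb
    simp [hb]

lemma pairW_cOf (w : Fin K → Fin L → ℝ) (μ : Fin K → Fin L → ℝ) {ks k : Fin K}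
    (hk : k ≠ ks) (lam : Fin K → Fin L → ℝ) :
    pairW w (cOf μ ks k lam)
      = (∑ l, w ks l * (μ ks l - lam ks l) ^ 2) + ∑ l, w k l * (μ k l - lam k l) ^ 2 := by
  have h : cOf μ ks k lam = fun k' l' =>
      (if k' = ks then (μ ks l' - lam ks l') ^ 2 else 0)
        + (if k' = k then (μ k l' - lam k l') ^ 2 else 0) := by
    funext k' l'
    unfold cOf
    split_ifs with h1 h2 <;> simp_all
  have hadd : pairW w (fun k' l' =>
      (if k' = ks then (μ ks l' - lam ks l') ^ 2 else 0)
        + (if k' = k then (μ k l' - lam k l') ^ 2 else 0))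
      = pairW w (fun k' l' => if k' = ks then (μ ks l' - lam ks l') ^ 2 else 0)
        + pairW w (fun k' l' => if k' = k then (μ k l' - lam k l') ^ 2 else 0) := by
    unfold pairW
    simp only [mul_add, Finset.sum_add_distrib]
  rw [h, hadd, pairW_row, pairW_row]

lemma cAll_nonneg (M : ℕ) (q : Fin L → ℝ) (μ : Fin K → Fin L → ℝ) (ks : Fin K) :
    ∀ c ∈ cAll M q μ ks, ∀ k l, 0 ≤ c k l := by
  rintro c (hc | hc) k l
  · obtain ⟨k', hk'⟩ := Set.mem_iUnion.1 hc
    obtain ⟨lam, _, _, rfl⟩ := hk'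
    unfold cOf
    split_ifs <;> positivity
  · obtain ⟨l', hl'⟩ := Set.mem_iUnion.1 hc
    rw [Set.mem_singleton_iff] at hl'
    subst hl'
    simp only
    split_ifs <;> positivity

lemma cAll_nonempty (M : ℕ) (hM : 1 ≤ M) (hML : M ≤ L) (q : Fin L → ℝ)
    (μ : Fin K → Fin L → ℝ) (ks : Fin K) : (cAll M q μ ks).Nonempty := by
  have hL : 0 < L := lt_of_lt_of_le hM hML
  refine ⟨_, Or.inr (Set.mem_iUnion.2 ⟨⟨⟨0, hL⟩, by show 0 < M; omega⟩, rfl⟩)⟩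

lemma iInf_sInf_eq {ι : Type*} [Nonempty ι] (A : ι → Set ℝ)
    (hA : ∀ i, (A i).Nonempty) (hA0 : ∀ i, ∀ x ∈ A i, (0:ℝ) ≤ x) :
    sInf (⋃ i, A i) = ⨅ i, sInf (A i) := by
  have hbdd : ∀ i, BddBelow (A i) := fun i => ⟨0, fun x hx => hA0 i x hx⟩
  have hUb : BddBelow (⋃ i, A i) := by
    refine ⟨0, ?_⟩
    rintro x hx
    obtain ⟨i, hi⟩ := Set.mem_iUnion.1 hx
    exact hA0 i x hi
  have hrbdd : BddBelow (Set.range fun i => sInf (A i)) := by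
    refine ⟨0, ?_⟩
    rintro x ⟨i, rfl⟩
    exact le_csInf (hA i) (hA0 i)
  apply le_antisymm
  · exact le_ciInf fun i =>
      csInf_le_csInf hUb (hA i) (Set.subset_iUnion A i)
  · refine le_csInf ?_ ?_
    · obtain ⟨i⟩ := (inferInstance : Nonempty ι)
      obtain ⟨x, hx⟩ := hA i
      exact ⟨x, Set.mem_iUnion.2 ⟨i, hx⟩⟩
    · rintro x hx
      obtain ⟨i, hi⟩ := Set.mem_iUnion.1 hx
      exact (ciInf_le hrbdd i).trans (csInf_le (hbdd i) hi)



lemma ffea_eq (M : ℕ) (hM : 1 ≤ M) (hML : M ≤ L) (μ : Fin K → Fin L → ℝ) (ks : Fin K)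
    (w : Fin K → Fin L → ℝ) :
    ffea M μ ks w = sInfP (cFeaSet M μ ks) w := by
  have hne : Nonempty {l : Fin L // (l : ℕ) < M} :=
    ⟨⟨⟨0, lt_of_lt_of_le hM hML⟩, by show 0 < M; omega⟩⟩
  unfold ffea sInfP cFeaSet
  rw [Set.image_iUnion]
  simp only [Set.image_singleton]
  rw [Set.iUnion_singleton_eq_range]
  have h : (fun l : {l : Fin L // (l : ℕ) < M} =>
      pairW w (fun k' l' => if k' = ks ∧ l' = l.1 then (μ ks l.1) ^ 2 else 0))
    = fun l : {l : Fin L // (l : ℕ) < M} => w ks l.1 * (μ ks l.1) ^ 2 := by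
    funext l
    exact pairW_single w ks l.1 ((μ ks l.1) ^ 2)
  rw [h, sInf_range]

lemma image_cOptSet (M : ℕ) (q : Fin L → ℝ) (μ : Fin K → Fin L → ℝ) {ks k : Fin K}
    (hk : k ≠ ks) (w : Fin K → Fin L → ℝ) :
    (fun c => pairW w c) '' cOptSet M q μ ks k
      = {v : ℝ | ∃ lam : Fin K → Fin L → ℝ,
          quality q lam ks ≤ quality q lam k ∧
          (∀ l : Fin L, (l : ℕ) < M → 0 ≤ lam k l) ∧
          v = (∑ l, w ks l * (μ ks l - lam ks l) ^ 2)
                + ∑ l, w k l * (μ k l - lam k l) ^ 2} := by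
  ext v
  constructor
  · rintro ⟨c, ⟨lam, h1, h2, rfl⟩, rfl⟩
    exact ⟨lam, h1, h2, (pairW_cOf w μ hk lam)⟩
  · rintro ⟨lam, h1, h2, rfl⟩
    exact ⟨cOf μ ks k lam, ⟨lam, h1, h2, rfl⟩, (pairW_cOf w μ hk lam).symm ▸ rfl⟩

lemma cOptSet_nonempty (M : ℕ) (q : Fin L → ℝ) (μ : Fin K → Fin L → ℝ) (ks k : Fin K) :
    (cOptSet M q μ ks k).Nonempty := by
  refine ⟨cOf μ ks k 0, 0, ?_, fun l _ => le_refl 0, rfl⟩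
  simp [quality]

lemma cOf_nonneg (μ : Fin K → Fin L → ℝ) (ks k : Fin K) (lam : Fin K → Fin L → ℝ) :
    ∀ k' l', 0 ≤ cOf μ ks k lam k' l' := by
  intro k' l'
  unfold cOf
  split_ifs <;> positivity

lemma fopt_eq (M : ℕ) (hK : 2 ≤ K) (q : Fin L → ℝ) (μ : Fin K → Fin L → ℝ) (ks : Fin K)
    {w : Fin K → Fin L → ℝ} (hw : w ∈ simplex K L) :
    fopt M q μ ks w = sInfP (⋃ k : {k : Fin K // k ≠ ks}, cOptSet M q μ ks k.1) w := by
  have hne : Nonempty {k : Fin K // k ≠ ks} := by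
    obtain ⟨k, hk⟩ := Fintype.exists_ne_of_one_lt_card (by rw [Fintype.card_fin]; omega) ks
    exact ⟨⟨k, hk⟩⟩
  unfold fopt sInfP
  rw [Set.image_iUnion]
  rw [iInf_sInf_eq]
  · refine iInf_congr fun k => ?_
    rw [image_cOptSet M q μ k.2 w]
  · exact fun k => (cOptSet_nonempty M q μ ks k.1).image _
  · rintro k x ⟨c, ⟨lam, _, _, rfl⟩, rfl⟩
    exact Finset.sum_nonneg fun k' _ => Finset.sum_nonneg fun l' _ =>
      mul_nonneg (hw.1 k' l') (cOf_nonneg μ ks k.1 lam k' l')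

end BanditHelper

/-- For `μ ∈ S` with `k*(μ) = ks ∈ [K]`, the function
`F_μ(w) = min(f^opt_μ(w), f^fea_μ(w))` is concave and continuous on the simplex. -/
theorem concaveOn_and_continuousOn_F {K L M : ℕ} (hK : 2 ≤ K) (hM : 1 ≤ M) (hML : M ≤ L)
    (q : Fin L → ℝ) (μ : Fin K → Fin L → ℝ) (ks : Fin K)
    (hμ : isBestArm M q μ (some ks)) :
    ConcaveOn ℝ (simplex K L) (fun w => min (fopt M q μ ks w) (ffea M μ ks w)) ∧
      ContinuousOn (fun w => min (fopt M q μ ks w) (ffea M μ ks w)) (simplex K L) := by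
  classical
  set C := BanditHelper.cAll M q μ ks with hC
  have hne : C.Nonempty := BanditHelper.cAll_nonempty M hM hML q μ ks
  have hnn : ∀ c ∈ C, ∀ k l, 0 ≤ c k l := BanditHelper.cAll_nonneg M q μ ks
  have hKL : Nonempty (Fin K × Fin L) := ⟨⟨⟨0, by omega⟩, ⟨0, by omega⟩⟩⟩
  have hks : Nonempty {k : Fin K // k ≠ ks} := by
    obtain ⟨k, hk⟩ := Fintype.exists_ne_of_one_lt_card (by rw [Fintype.card_fin]; omega) ks
    exact ⟨⟨k, hk⟩⟩
  have heq : ∀ w ∈ simplex K L,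
      min (fopt M q μ ks w) (ffea M μ ks w) = BanditHelper.sInfP C w := by
    intro w hw
    rw [BanditHelper.fopt_eq M hK q μ ks hw, BanditHelper.ffea_eq M hM hML μ ks w]
    show min (sInf ((fun c => BanditHelper.pairW w c) ''
        (⋃ k : {k : Fin K // k ≠ ks}, BanditHelper.cOptSet M q μ ks k.1)))
      (sInf ((fun c => BanditHelper.pairW w c) '' BanditHelper.cFeaSet M μ ks))
      = sInf ((fun c => BanditHelper.pairW w c) '' C)
    have hCoptne : (⋃ k : {k : Fin K // k ≠ ks}, BanditHelper.cOptSet M q μ ks k.1).Nonempty := by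
      obtain ⟨k⟩ := hks
      obtain ⟨c, hc⟩ := BanditHelper.cOptSet_nonempty M q μ ks k.1
      exact ⟨c, Set.mem_iUnion.2 ⟨k, hc⟩⟩
    have hCfeane : (BanditHelper.cFeaSet M μ ks).Nonempty := by
      have hL : 0 < L := lt_of_lt_of_le hM hML
      exact ⟨_, Set.mem_iUnion.2 ⟨⟨⟨0, hL⟩, by show 0 < M; omega⟩, rfl⟩⟩
    have hb1 : BddBelow ((fun c => BanditHelper.pairW w c) ''
        (⋃ k : {k : Fin K // k ≠ ks}, BanditHelper.cOptSet M q μ ks k.1)) :=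
      BanditHelper.bddBelow_pairs (fun c hc => hnn c (Or.inl hc)) hw.1
    have hb2 : BddBelow ((fun c => BanditHelper.pairW w c) '' BanditHelper.cFeaSet M μ ks) :=
      BanditHelper.bddBelow_pairs (fun c hc => hnn c (Or.inr hc)) hw.1
    rw [hC]
    unfold BanditHelper.cAll
    rw [Set.image_union, csInf_union hb1 (hCoptne.image _) hb2 (hCfeane.image _)]
  refine ⟨⟨BanditHelper.convex_simplex, ?_⟩, ?_⟩
  · intro x hx y hy a b ha hb hab
    have hm := BanditHelper.convex_simplex hx hy ha hb hab
    show a • min (fopt M q μ ks x) (ffea M μ ks x)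
        + b • min (fopt M q μ ks y) (ffea M μ ks y)
      ≤ min (fopt M q μ ks (a • x + b • y)) (ffea M μ ks (a • x + b • y))
    rw [heq x hx, heq y hy, heq _ hm]
    exact (BanditHelper.concaveOn_sInfP hne hnn).2 hx hy ha hb hab
  · exact (BanditHelper.continuousOn_sInfP hKL hne hnn).congr heq
end
end

section
/- Let μ ∈ ℝ^{K×L} be such that every arm k ∈ [K] has at least one l ∈ [M] with μ_{k,l} < 0. For each k, let m_k = max{μ_{k,l}² : l ∈ [M], μ_{k,l} < 0}, attained at some index l(k). Then max_{w ∈ Σ_{K×L}} min_{k∈[K]} Σ_{l∈[M], μ_{k,l}<0} w_{k,l} μ_{k,l}² = (Σ_{k=1}^K m_k^{-1})^{-1}, and this maximum is attained by the weight vector w* with w*_{k,l(k)} = m_k^{-1}(Σ_{j=1}^K m_j^{-1})^{-1} for each k ∈ [K] and w*_{k,l} = 0 for all other entries. -/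
open Finset Set

noncomputable section

/-- Explicit solution of the max-min problem when every arm violates some constraint:
with `m k = max{μ_{k,l}² : l ∈ [M], μ_{k,l} < 0}` attained at `l(k)`, the optimal value is
`(Σ_k m_k⁻¹)⁻¹`, attained at the weight vector `w*` supported on the entries `(k, l(k))`. -/
theorem maxMin_gInfeas_explicit {K L M : ℕ} (hK : 2 ≤ K) (hM : 1 ≤ M) (hML : M ≤ L)
    (μ : Fin K → Fin L → ℝ)
    (hviol : ∀ k : Fin K, ∃ l : Fin L, (l : ℕ) < M ∧ μ k l < 0)
    (lk : Fin K → Fin L)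
    (hlk : ∀ k, (lk k : ℕ) < M ∧ μ k (lk k) < 0)
    (hlkmax : ∀ k, ∀ l : Fin L, (l : ℕ) < M → μ k l < 0 → (μ k l) ^ 2 ≤ (μ k (lk k)) ^ 2)
    (m : Fin K → ℝ) (hm : ∀ k, m k = (μ k (lk k)) ^ 2)
    (wstar : Fin K → Fin L → ℝ)
    (hwstar : ∀ k l, wstar k l
      = if l = lk k then (m k)⁻¹ * (∑ j, (m j)⁻¹)⁻¹ else 0) :
    wstar ∈ simplex K L ∧
      gInfeas M μ wstar = (∑ j, (m j)⁻¹)⁻¹ ∧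
      ∀ w ∈ simplex K L, gInfeas M μ w ≤ (∑ j, (m j)⁻¹)⁻¹ := by
  have hK0 : 0 < K := by omega
  haveI : Nonempty (Fin K) := ⟨⟨0, hK0⟩⟩
  have hm0 : ∀ k, 0 < m k := fun k => by
    rw [hm k]; have := (hlk k).2; nlinarith
  set S : ℝ := ∑ j, (m j)⁻¹ with hSdef
  have hS : 0 < S := Finset.sum_pos (fun j _ => inv_pos.2 (hm0 j)) ⟨⟨0, hK0⟩, mem_univ _⟩
  have hrow : ∀ k, ∑ l, wstar k l = (m k)⁻¹ * S⁻¹ := by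
    intro k
    have : ∀ l, wstar k l = if l = lk k then (m k)⁻¹ * S⁻¹ else 0 := hwstar k
    simp [this, Finset.sum_ite_eq']
  refine ⟨⟨fun k l => by
      rw [hwstar k l]; split_ifs
      · exact mul_nonneg (inv_nonneg.2 (hm0 k).le) (inv_nonneg.2 hS.le)
      · exact le_refl 0, ?_⟩, ?_, ?_⟩
  · simp only [hrow]
    rw [← Finset.sum_mul, ← hSdef, mul_inv_cancel₀ (ne_of_gt hS)]
  · -- value at wstar
    have hval : ∀ k : Fin K,
        (∑ l ∈ univ.filter (fun l : Fin L => (l : ℕ) < M ∧ μ k l < 0),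
          wstar k l * (μ k l) ^ 2) = S⁻¹ := by
      intro k
      rw [Finset.sum_eq_single_of_mem (lk k)
        (by simp [Finset.mem_filter, (hlk k).1, (hlk k).2])
        (fun l _ hne => by rw [hwstar k l, if_neg hne, zero_mul])]
      rw [hwstar k (lk k), if_pos rfl, ← hm k, mul_comm, ← mul_assoc,
        mul_inv_cancel₀ (hm0 k).ne', one_mul]
    unfold gInfeas
    simp only [hval]
    exact ciInf_const
  · intro w hw
    obtain ⟨hwpos, hwsum⟩ := hw
    set c := gInfeas M μ w with hc
    by_cases hc0 : c ≤ 0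
    · exact hc0.trans (le_of_lt (inv_pos.2 hS))
    push_neg at hc0
    have hle : ∀ k : Fin K, c ≤ m k * ∑ l, w k l := by
      intro k
      have h1 : c ≤ ∑ l ∈ univ.filter (fun l : Fin L => (l : ℕ) < M ∧ μ k l < 0),
          w k l * (μ k l) ^ 2 :=
        ciInf_le (Finite.bddBelow_range _) k
      refine h1.trans ?_
      calc ∑ l ∈ univ.filter (fun l : Fin L => (l : ℕ) < M ∧ μ k l < 0),
            w k l * (μ k l) ^ 2
          ≤ ∑ l ∈ univ.filter (fun l : Fin L => (l : ℕ) < M ∧ μ k l < 0),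
            w k l * m k := by
            refine Finset.sum_le_sum fun l hl => ?_
            rw [Finset.mem_filter] at hl
            have := hlkmax k l hl.2.1 hl.2.2
            rw [hm k]
            exact mul_le_mul_of_nonneg_left this (hwpos k l)
        _ ≤ ∑ l, w k l * m k := by
            refine Finset.sum_le_sum_of_subset_of_nonneg (Finset.filter_subset _ _)
              fun l _ _ => mul_nonneg (hwpos k l) (le_of_lt (hm0 k))
        _ = m k * ∑ l, w k l := by rw [Finset.mul_sum]; exact Finset.sum_congr rfl fun l _ => mul_comm _ _
    have hcS : c * S ≤ 1 := by
      have h2 : ∀ k : Fin K, c * (m k)⁻¹ ≤ ∑ l, w k l := by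
        intro k
        have hk := hle k
        have hmk := hm0 k
        rw [mul_inv_le_iff₀ hmk, mul_comm]
        exact hk
      calc c * S = ∑ k, c * (m k)⁻¹ := by rw [hSdef, Finset.mul_sum]
        _ ≤ ∑ k, ∑ l, w k l := Finset.sum_le_sum fun k _ => h2 k
        _ = 1 := hwsum
    calc c = c * S * S⁻¹ := by field_simp
      _ ≤ 1 * S⁻¹ := mul_le_mul_of_nonneg_right hcS (inv_nonneg.2 hS.le)
      _ = S⁻¹ := one_mul _
end
end

section
/- Let μ ∈ S satisfy k* = k*(μ) ∈ [K], and let w ∈ Σ_{K×L} have all entries strictly positive. Then min(f^opt_μ(w), f^fea_μ(w)) > 0. -/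
open Finset Set

noncomputable section

private lemma cs_aux' {L : ℕ} (q t ww : Fin L → ℝ) (hw : ∀ l, 0 < ww l) :
    (∑ l, q l * t l) ^ 2 ≤ (∑ l, q l ^ 2 / ww l) * (∑ l, ww l * t l ^ 2) := by
  have h := Finset.sum_mul_sq_le_sq_mul_sq univ
    (fun l => q l / Real.sqrt (ww l)) (fun l => Real.sqrt (ww l) * t l)
  have e1 : ∀ l : Fin L, q l / Real.sqrt (ww l) * (Real.sqrt (ww l) * t l) = q l * t l := by
    intro l
    have h0 : Real.sqrt (ww l) ≠ 0 := (Real.sqrt_ne_zero (hw l).le).mpr (hw l).ne'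
    field_simp
  have e2 : ∀ l : Fin L, (q l / Real.sqrt (ww l)) ^ 2 = q l ^ 2 / ww l := by
    intro l
    rw [div_pow, Real.sq_sqrt (hw l).le]
  have e3 : ∀ l : Fin L, (Real.sqrt (ww l) * t l) ^ 2 = ww l * t l ^ 2 := by
    intro l
    rw [mul_pow, Real.sq_sqrt (hw l).le]
  simpa only [e1, e2, e3] using h

/-- `|∑ q t| ≤ √(∑ q²/w) * √v` whenever `∑ w t² ≤ v`. -/
private lemma abs_sum_le_sqrt {L : ℕ} (q t ww : Fin L → ℝ) (hw : ∀ l, 0 < ww l)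
    (v : ℝ) (hv : ∑ l, ww l * t l ^ 2 ≤ v) :
    |∑ l, q l * t l| ≤ Real.sqrt (∑ l, q l ^ 2 / ww l) * Real.sqrt v := by
  have h2 := cs_aux' q t ww hw
  have hB : (0:ℝ) ≤ ∑ l, ww l * t l ^ 2 :=
    Finset.sum_nonneg fun l _ => mul_nonneg (hw l).le (sq_nonneg _)
  have hC : (0:ℝ) ≤ ∑ l, q l ^ 2 / ww l :=
    Finset.sum_nonneg fun l _ => div_nonneg (sq_nonneg _) (hw l).le
  calc |∑ l, q l * t l| = Real.sqrt ((∑ l, q l * t l) ^ 2) := (Real.sqrt_sq_eq_abs _).symm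
    _ ≤ Real.sqrt ((∑ l, q l ^ 2 / ww l) * (∑ l, ww l * t l ^ 2)) := Real.sqrt_le_sqrt h2
    _ = Real.sqrt (∑ l, q l ^ 2 / ww l) * Real.sqrt (∑ l, ww l * t l ^ 2) :=
        Real.sqrt_mul hC _
    _ ≤ Real.sqrt (∑ l, q l ^ 2 / ww l) * Real.sqrt v :=
        mul_le_mul_of_nonneg_left (Real.sqrt_le_sqrt hv) (Real.sqrt_nonneg _)

/-- For `μ ∈ S` with `k*(μ) = ks ∈ [K]` and a weight vector in the simplex with all entries
strictly positive, `min(f^opt_μ(w), f^fea_μ(w)) > 0`. -/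
theorem F_pos_of_pos_weights {K L M : ℕ} (hK : 2 ≤ K) (hM : 1 ≤ M) (hML : M ≤ L)
    (q : Fin L → ℝ) (μ : Fin K → Fin L → ℝ) (ks : Fin K)
    (hμ : isBestArm M q μ (some ks))
    (w : Fin K → Fin L → ℝ) (hw : w ∈ simplex K L) (hwpos : ∀ k l, 0 < w k l) :
    0 < min (fopt M q μ ks w) (ffea M μ ks w) := by
  rw [lt_min_iff]
  have hLpos : 0 < L := lt_of_lt_of_le hM hML
  constructor
  · -- fopt positive
    haveI : Nontrivial (Fin K) := Fin.nontrivial_iff_two_le.mpr hK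
    obtain ⟨k1, hk1⟩ := exists_ne ks
    haveI : Nonempty {k : Fin K // k ≠ ks} := ⟨⟨k1, hk1⟩⟩
    rw [fopt]
    obtain ⟨k0, hk0⟩ := exists_eq_ciInf_of_finite
      (f := fun k : {k : Fin K // k ≠ ks} =>
        sInf {v : ℝ | ∃ lam : Fin K → Fin L → ℝ,
          quality q lam ks ≤ quality q lam k.1 ∧
          (∀ l : Fin L, (l : ℕ) < M → 0 ≤ lam k.1 l) ∧
          v = (∑ l, w ks l * (μ ks l - lam ks l) ^ 2)
                + ∑ l, w k.1 l * (μ k.1 l - lam k.1 l) ^ 2})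
    rw [← hk0]
    obtain ⟨k, hk⟩ := k0
    -- the set is nonempty (take lam = 0)
    have hSne : {v : ℝ | ∃ lam : Fin K → Fin L → ℝ,
          quality q lam ks ≤ quality q lam k ∧
          (∀ l : Fin L, (l : ℕ) < M → 0 ≤ lam k l) ∧
          v = (∑ l, w ks l * (μ ks l - lam ks l) ^ 2)
                + ∑ l, w k l * (μ k l - lam k l) ^ 2}.Nonempty := by
      refine ⟨_, fun _ _ => 0, ?_, fun _ _ => le_refl 0, rfl⟩
      simp [quality]
    -- a uniform positive lower bound on the set
    have key : ∃ ε : ℝ, 0 < ε ∧ ∀ v ∈ {v : ℝ | ∃ lam : Fin K → Fin L → ℝ,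
          quality q lam ks ≤ quality q lam k ∧
          (∀ l : Fin L, (l : ℕ) < M → 0 ≤ lam k l) ∧
          v = (∑ l, w ks l * (μ ks l - lam ks l) ^ 2)
                + ∑ l, w k l * (μ k l - lam k l) ^ 2}, ε ≤ v := by
      by_cases hfe : feasible M μ k
      · -- feasible competitor: quality gap + Cauchy-Schwarz
        have hδ : 0 < quality q μ ks - quality q μ k :=
          sub_pos.mpr (hμ.2 k hk hfe)
        set δ := quality q μ ks - quality q μ k with hδdef
        have hq : ∃ l, q l ≠ 0 := by
          by_contra h
          push_neg at h
          have h1 : quality q μ ks = 0 := by simp [quality, h]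
          have h2 : quality q μ k = 0 := by simp [quality, h]
          rw [hδdef, h1, h2] at hδ
          simp at hδ
        obtain ⟨l1, hl1⟩ := hq
        have hCk : (0:ℝ) < ∑ l, q l ^ 2 / w k l := by
          refine Finset.sum_pos' (fun l _ => div_nonneg (sq_nonneg _) (hwpos k l).le)
            ⟨l1, Finset.mem_univ _, ?_⟩
          have hq2 : 0 < q l1 ^ 2 :=
            lt_of_le_of_ne (sq_nonneg _) (Ne.symm (pow_ne_zero 2 hl1))
          exact div_pos hq2 (hwpos k l1)
        set Ck := ∑ l, q l ^ 2 / w k l with hCkdef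
        set Cks := ∑ l, q l ^ 2 / w ks l with hCksdef
        have hCks : (0:ℝ) ≤ Cks := Finset.sum_nonneg fun l _ => div_nonneg (sq_nonneg _) (hwpos ks l).le
        set D := Real.sqrt Ck + Real.sqrt Cks with hDdef
        have hD : 0 < D := add_pos_of_pos_of_nonneg (Real.sqrt_pos.mpr hCk) (Real.sqrt_nonneg _)
        refine ⟨(δ / D) ^ 2, pow_pos (div_pos hδ hD) 2, ?_⟩
        rintro v ⟨lam, hcon, hfeas, rfl⟩
        set A := ∑ l, w ks l * (μ ks l - lam ks l) ^ 2 with hAdef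
        set B := ∑ l, w k l * (μ k l - lam k l) ^ 2 with hBdef
        have hA0 : 0 ≤ A := Finset.sum_nonneg fun l _ => mul_nonneg (hwpos ks l).le (sq_nonneg _)
        have hB0 : 0 ≤ B := Finset.sum_nonneg fun l _ => mul_nonneg (hwpos k l).le (sq_nonneg _)
        have hv0 : 0 ≤ A + B := by linarith
        -- δ ≤ Q - P
        set P := ∑ l, q l * (μ k l - lam k l) with hPdef
        set Q := ∑ l, q l * (μ ks l - lam ks l) with hQdef
        have hQP : δ ≤ Q - P := by
          simp only [quality] at hcon hδdef
          have e : Q - P = (∑ l, q l * μ ks l - ∑ l, q l * lam ks l)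
              - (∑ l, q l * μ k l - ∑ l, q l * lam k l) := by
            simp only [hQdef, hPdef, mul_sub, Finset.sum_sub_distrib]
          rw [e, hδdef]
          linarith
        have hPle : |P| ≤ Real.sqrt Ck * Real.sqrt (A + B) :=
          abs_sum_le_sqrt q (fun l => μ k l - lam k l) (w k) (hwpos k) (A + B) (by linarith)
        have hQle : |Q| ≤ Real.sqrt Cks * Real.sqrt (A + B) :=
          abs_sum_le_sqrt q (fun l => μ ks l - lam ks l) (w ks) (hwpos ks) (A + B) (by linarith)
        have hδD : δ ≤ D * Real.sqrt (A + B) := by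
          have h1 : Q - P ≤ |Q| + |P| := by
            calc Q - P ≤ |Q - P| := le_abs_self _
              _ ≤ |Q| + |P| := abs_sub _ _
          rw [hDdef, add_mul]
          linarith
        have hsq : δ / D ≤ Real.sqrt (A + B) := by
          rw [div_le_iff₀ hD]
          linarith [hδD, mul_comm D (Real.sqrt (A + B))]
        calc (δ / D) ^ 2 ≤ Real.sqrt (A + B) ^ 2 := by
              have : 0 ≤ δ / D := by positivity
              exact pow_le_pow_left₀ this hsq 2
          _ = A + B := Real.sq_sqrt hv0
      · -- infeasible competitor: a violated constraint gives the bound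
        simp only [feasible, not_forall] at hfe
        obtain ⟨l0, hl0M, hneg⟩ := hfe
        push_neg at hneg
        have h0 : μ k l0 ≠ 0 := ne_of_lt hneg
        refine ⟨w k l0 * μ k l0 ^ 2,
          mul_pos (hwpos k l0) (lt_of_le_of_ne (sq_nonneg _) (Ne.symm (pow_ne_zero 2 h0))), ?_⟩
        rintro v ⟨lam, hcon, hfeas, rfl⟩
        have h1 : w k l0 * μ k l0 ^ 2 ≤ w k l0 * (μ k l0 - lam k l0) ^ 2 := by
          have h2 := hfeas l0 hl0M
          have h5 : μ k l0 ^ 2 ≤ (μ k l0 - lam k l0) ^ 2 := by nlinarith [mul_nonneg h2 h2]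
          exact mul_le_mul_of_nonneg_left h5 (hwpos k l0).le
        have h3 : w k l0 * (μ k l0 - lam k l0) ^ 2
            ≤ ∑ l, w k l * (μ k l - lam k l) ^ 2 :=
          Finset.single_le_sum (f := fun l => w k l * (μ k l - lam k l) ^ 2)
            (fun l _ => mul_nonneg (hwpos k l).le (sq_nonneg _)) (Finset.mem_univ l0)
        have h4 : (0:ℝ) ≤ ∑ l, w ks l * (μ ks l - lam ks l) ^ 2 :=
          Finset.sum_nonneg fun l _ => mul_nonneg (hwpos ks l).le (sq_nonneg _)
        linarith
    obtain ⟨ε, hε, hbd⟩ := key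
    exact lt_of_lt_of_le hε (le_csInf hSne hbd)
  · -- ffea positive
    haveI : Nonempty {l : Fin L // (l : ℕ) < M} := ⟨⟨⟨0, hLpos⟩, hM⟩⟩
    rw [ffea]
    obtain ⟨l0, hl0⟩ := exists_eq_ciInf_of_finite
      (f := fun l : {l : Fin L // (l : ℕ) < M} => w ks l.1 * (μ ks l.1) ^ 2)
    rw [← hl0]
    exact mul_pos (hwpos ks l0.1) (pow_pos (hμ.1 l0.1 l0.2) 2)
end
end

section
/- Let μ ∈ S satisfy C(μ) = ∅ (so k*(μ) = 0), and let w ∈ Σ_{K×L}. For i ∈ [K], define l(i) ∈ argmax{μ_{i,l}² : l ∈ [M], μ_{i,l} < 0}, and let λ^{(i)} ∈ ℝ^{K×L} agree with μ except that λ^{(i)}_{i,l} = 0 for every l ∈ [M] with μ_{i,l} < 0. Then for every ε > 0 and every i ∈ [K], there exists λ ∈ Alt(μ) with Σ_{k∈[K]} Σ_{l∈[L]} w_{k,l}(μ_{k,l} − λ_{k,l})² < Σ_{l∈[M], μ_{i,l}<0} w_{i,l} μ_{i,l}² + ε; consequently inf_{λ ∈ Alt(μ)} Σ_{k,l} w_{k,l}(μ_{k,l}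 − λ_{k,l})² ≤ min_{k∈[K]} Σ_{l∈[M], μ_{k,l}<0} w_{k,l} μ_{k,l}². -/
open Finset Set

noncomputable section

/-- Case `k*(μ) = 0`, upper bound direction: for each arm `i`, zeroing out the violated
constraint means of arm `i` yields alternatives arbitrarily close in objective value, so
the infimum over `Alt(μ)` is at most `min_k Σ_{l∈[M], μ_{k,l}<0} w_{k,l} μ_{k,l}²`. -/
theorem inf_alt_le_gInfeas {K L M : ℕ} (hK : 2 ≤ K) (hM : 1 ≤ M) (hML : M ≤ L)
    (q : Fin L → ℝ) (μ : Fin K → Fin L → ℝ)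
    (hμ : isBestArm M q μ (none : Option (Fin K)))
    (w : Fin K → Fin L → ℝ) (hw : w ∈ simplex K L)
    (lk : Fin K → Fin L)
    (hlk : ∀ i, (lk i : ℕ) < M ∧ μ i (lk i) < 0 ∧
      ∀ l : Fin L, (l : ℕ) < M → μ i l < 0 → (μ i l) ^ 2 ≤ (μ i (lk i)) ^ 2)
    (lamI : Fin K → (Fin K → Fin L → ℝ))
    (hlamI : ∀ i : Fin K, ∀ k : Fin K, ∀ l : Fin L,
      lamI i k l = if k = i ∧ (l : ℕ) < M ∧ μ k l < 0 then 0 else μ k l) :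
    (∀ ε > (0 : ℝ), ∀ i : Fin K,
        ∃ lam ∈ Alt M q (none : Option (Fin K)),
          wDist w μ lam
            < (∑ l ∈ Finset.univ.filter (fun l : Fin L => (l : ℕ) < M ∧ μ i l < 0),
                w i l * (μ i l) ^ 2) + ε) ∧
      sInf (wDist w μ '' Alt M q (none : Option (Fin K))) ≤ gInfeas M μ w := by
  obtain ⟨hw0, hw1⟩ := hw
  haveI : Nonempty (Fin K) := ⟨⟨0, by omega⟩⟩
  have hbdd : BddBelow (wDist w μ '' Alt M q (none : Option (Fin K))) := by
    refine ⟨0, ?_⟩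
    rintro x ⟨lam, -, rfl⟩
    exact Finset.sum_nonneg fun k _ => Finset.sum_nonneg fun l _ =>
      mul_nonneg (hw0 k l) (sq_nonneg _)
  have main : ∀ ε > (0 : ℝ), ∀ i : Fin K,
      ∃ lam ∈ Alt M q (none : Option (Fin K)),
        wDist w μ lam
          < (∑ l ∈ Finset.univ.filter (fun l : Fin L => (l : ℕ) < M ∧ μ i l < 0),
              w i l * (μ i l) ^ 2) + ε := by
    intro ε hε i
    set T : ℝ := ∑ l ∈ Finset.univ.filter (fun l : Fin L => (l : ℕ) < M ∧ μ i l < 0),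
        w i l * (μ i l) ^ 2 with hT
    set lamδ : ℝ → Fin K → Fin L → ℝ :=
      fun δ k l => if k = i ∧ (l : ℕ) < M then max (μ k l) δ else μ k l with hlamdef
    have hterm : ∀ k l, w k l * (μ k l - lamδ 0 k l) ^ 2 =
        if k = i ∧ (l : ℕ) < M ∧ μ k l < 0 then w k l * (μ k l) ^ 2 else 0 := by
      intro k l
      by_cases hcond : k = i ∧ (l : ℕ) < M ∧ μ k l < 0
      · obtain ⟨h1, h2, h3⟩ := hcond
        rw [if_pos ⟨h1, h2, h3⟩]
        have h0 : lamδ 0 k l = 0 := by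
          simp only [hlamdef]
          rw [if_pos ⟨h1, h2⟩]
          exact max_eq_right h3.le
        rw [h0, sub_zero]
      · rw [if_neg hcond]
        have h0 : lamδ 0 k l = μ k l := by
          simp only [hlamdef]
          by_cases h : k = i ∧ (l : ℕ) < M
          · have hnn : 0 ≤ μ k l := by
              by_contra hn
              push_neg at hn
              exact hcond ⟨h.1, h.2, hn⟩
            rw [if_pos h]
            exact max_eq_left hnn
          · rw [if_neg h]
        rw [h0, sub_self]
        ring
    have hf0 : wDist w μ (lamδ 0) = T := by
      unfold wDist
      rw [Finset.sum_congr rfl (fun k _ => Finset.sum_congr rfl (fun l _ => hterm k l))]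
      rw [Finset.sum_eq_single i]
      · rw [hT, Finset.sum_filter]
        refine Finset.sum_congr rfl fun l _ => ?_
        by_cases h : (l : ℕ) < M ∧ μ i l < 0
        · rw [if_pos (by tauto : i = i ∧ (l : ℕ) < M ∧ μ i l < 0), if_pos h]
        · rw [if_neg (by tauto), if_neg h]
      · intro k _ hk
        exact Finset.sum_eq_zero fun l _ => if_neg (by tauto)
      · intro h
        exact absurd (Finset.mem_univ i) h
    have fcont : Continuous (fun δ : ℝ => wDist w μ (lamδ δ)) := by
      unfold wDist
      apply continuous_finset_sum
      intro k _
      apply continuous_finset_sum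
      intro l _
      by_cases h : k = i ∧ (l : ℕ) < M
      · simp only [hlamdef, if_pos h]
        exact continuous_const.mul
          (((continuous_const.sub (continuous_const.max continuous_id)).pow 2))
      · simp only [hlamdef, if_neg h]
        exact continuous_const
    have htend : Filter.Tendsto (fun δ : ℝ => wDist w μ (lamδ δ))
        (nhdsWithin 0 (Set.Ioi 0)) (nhds T) := by
      rw [← hf0]
      exact (fcont.tendsto 0).mono_left nhdsWithin_le_nhds
    have hev : ∀ᶠ δ in nhdsWithin (0:ℝ) (Set.Ioi 0),
        wDist w μ (lamδ δ) < T + ε :=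
      htend.eventually_lt_const (by linarith)
    obtain ⟨δ, hδlt, hδpos⟩ := (hev.and eventually_mem_nhdsWithin).exists
    refine ⟨lamδ δ, ⟨some i, ⟨?_, ?_⟩, by simp⟩, hδlt⟩
    · intro l hlM
      have h0 : lamδ δ i l = max (μ i l) δ := by
        simp [hlamdef, hlM]
      rw [h0]
      exact lt_max_of_lt_right hδpos
    · intro j hj hfeas
      exfalso
      obtain ⟨l, hlM, hneg⟩ := hμ j
      have hfl := hfeas l hlM
      have h0 : lamδ δ j l = μ j l := by
        simp only [hlamdef]
        rw [if_neg (fun h => hj h.1)]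
      rw [h0] at hfl
      linarith
  refine ⟨main, ?_⟩
  refine le_ciInf fun k => ?_
  refine le_of_forall_pos_le_add fun ε hε => ?_
  obtain ⟨lam, hmem, hlt⟩ := main ε hε k
  exact le_trans (csInf_le hbdd ⟨lam, hmem, rfl⟩) hlt.le
end
end
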